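/- Let α ≥ 2, m ≥ 1, μ > 0, Δ > 0. If 0 ≤ p < 1 - (m(Δμ(αm-α+1) + α²)/(α(Δμ+1)(αm-α+1)))^{1/(α-1)}, then ∑_{φ=α}^{αm} (αμ/(Δμ + α(H_φ - H_{φ-α}))) C(αm,φ)(1-p)^φ p^{αm-φ} > ∑_{φ=1}^{m} (μ/(Δμ + H_φ)) C(m,φ)(1-p)^φ p^{m-φ}. -/

import Mathlib

/-- The ℓ-th harmonic number H_ℓ = ∑_{i=1}^ℓ 1/i. -/
noncomputable def H (n : ℕ) : ℝ := ∑ i ∈ Finset.range n, 1 / (i + 1 : ℝ)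

lemma choose_add_add_le (s t c : ℕ) : s.choose t ≤ (s+c).choose (t+c) := by
  induction c with
  | zero => exact le_refl _
  | succ c ih =>
    calc s.choose t ≤ (s+c).choose (t+c) := ih
    _ ≤ (s+c+1).choose (t+c+1) := by
        rw [Nat.choose_succ_succ]; exact Nat.le_add_right _ _

lemma choose_sub_le {a n φ : ℕ} (h1 : a ≤ φ) (h2 : φ ≤ n) :
    (n-a).choose (φ-a) ≤ n.choose φ := by
  have := choose_add_add_le (n-a) (φ-a) a
  rwa [Nat.sub_add_cancel (h1.trans h2), Nat.sub_add_cancel h1] at this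

lemma lemB {a n φ : ℕ} (ha : 1 ≤ a) (h1 : a ≤ φ) (h2 : φ ≤ n) :
    (n - a + 1) * (n-a).choose (φ-a) ≤ (φ - a + 1) * n.choose φ := by
  have key : (n - a + 1) * (n-a).choose (φ-a) = (n-a+1).choose (φ-a+1) * (φ - a + 1) :=
    Nat.add_one_mul_choose_eq (n-a) (φ-a)
  have h3 : (n-a+1) + (a-1) = n := by omega
  have h4 : (φ-a+1) + (a-1) = φ := by omega
  have h5 : (n-a+1).choose (φ-a+1) ≤ n.choose φ := by
    have := choose_add_add_le (n-a+1) (φ-a+1) (a-1)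
    rwa [h3, h4] at this
  calc (n - a + 1) * (n-a).choose (φ-a) = (n-a+1).choose (φ-a+1) * (φ - a + 1) := key
  _ ≤ n.choose φ * (φ - a + 1) := Nat.mul_le_mul_right _ h5
  _ = (φ - a + 1) * n.choose φ := Nat.mul_comm _ _

lemma Hdiff_eq {a b : ℕ} (h : a ≤ b) : H b - H a = ∑ i ∈ Finset.Ico a b, 1 / (i + 1 : ℝ) := by
  rw [Finset.sum_Ico_eq_sub _ h]; rfl

lemma Hdiff_nonneg {a b : ℕ} (h : a ≤ b) : 0 ≤ H b - H a := by
  rw [Hdiff_eq h]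
  exact Finset.sum_nonneg fun i _ => by positivity

lemma Hdiff_le {α φ : ℕ} (h : α ≤ φ) :
    (H φ - H (φ - α)) * ((φ - α : ℕ) + 1) ≤ α := by
  rw [Hdiff_eq (Nat.sub_le _ _)]
  have hb : ∑ i ∈ Finset.Ico (φ-α) φ, 1 / (i + 1 : ℝ)
      ≤ (Finset.Ico (φ-α) φ).card • (1 / (((φ-α : ℕ) : ℝ) + 1)) := by
    apply Finset.sum_le_card_nsmul
    intro i hi
    rw [Finset.mem_Ico] at hi
    have : ((φ-α : ℕ):ℝ) + 1 ≤ (i:ℝ) + 1 := by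
      have := hi.1; exact_mod_cast Nat.succ_le_succ this
    exact one_div_le_one_div_of_le (by positivity) this
  rw [Nat.card_Ico, Nat.sub_sub_self h] at hb
  have hd : (0:ℝ) < ((φ-α : ℕ):ℝ) + 1 := by positivity
  rw [nsmul_eq_mul] at hb
  calc (∑ i ∈ Finset.Ico (φ-α) φ, 1 / (i + 1 : ℝ)) * (((φ - α:ℕ):ℝ) + 1)
      ≤ ((α:ℝ) * (1 / (((φ-α : ℕ) : ℝ) + 1))) * (((φ - α:ℕ):ℝ) + 1) :=
        mul_le_mul_of_nonneg_right hb (le_of_lt hd)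
  _ = α := by
      rw [mul_assoc, one_div_mul_cancel (ne_of_gt hd), mul_one]

lemma H_one_le {n : ℕ} (hn : 1 ≤ n) : 1 ≤ H n := by
  have : (1:ℝ) = 1 / ((0:ℕ) + 1 : ℝ) := by norm_num
  rw [this, H]
  apply Finset.single_le_sum (f := fun i : ℕ => 1 / ((i:ℝ) + 1))
  · intro i _; positivity
  · simp only [Finset.mem_range]; omega

theorem shifted_prob_access_alpha_better_than_one (α m : ℕ) (μ Δ p : ℝ)
    (hα : 2 ≤ α) (hm : 1 ≤ m) (hμ : 0 < μ) (hΔ : 0 < Δ)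
    (hp0 : 0 ≤ p)
    (hp : p < 1 - ((m : ℝ) * (Δ * μ * ((α : ℝ) * m - α + 1) + α ^ 2) /
        ((α : ℝ) * (Δ * μ + 1) * ((α : ℝ) * m - α + 1))) ^ ((1 : ℝ) / ((α : ℝ) - 1))) :
    ∑ φ ∈ Finset.Icc α (α * m),
        (α * μ / (Δ * μ + α * (H φ - H (φ - α)))) *
          ((α * m).choose φ : ℝ) * (1 - p) ^ φ * p ^ (α * m - φ) >
      ∑ φ ∈ Finset.Icc 1 m,
        (μ / (Δ * μ + H φ)) * (m.choose φ : ℝ) * (1 - p) ^ φ * p ^ (m - φ) := by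
  have hα1 : 1 ≤ α := by omega
  have hm0 : 0 < m := hm
  have hαn : α ≤ α * m := Nat.le_mul_of_pos_right α hm0
  have hs : 0 < Δ * μ := mul_pos hΔ hμ
  have hαR : (2:ℝ) ≤ (α:ℝ) := by exact_mod_cast hα
  have hmR : (1:ℝ) ≤ (m:ℝ) := by exact_mod_cast hm
  have hKcast0 : ((α * m - α + 1 : ℕ) : ℝ) = (α:ℝ) * m - (α:ℝ) + 1 := by
    push_cast [Nat.cast_sub hαn]
    ring
  set n := α * m with hn
  set K : ℝ := (α:ℝ) * m - (α:ℝ) + 1 with hK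
  have hKpos : 0 < K := by rw [hK]; nlinarith
  have hKcast : ((n - α + 1 : ℕ) : ℝ) = K := hKcast0
  set T := ((m : ℝ) * (Δ * μ * K + (α:ℝ) ^ 2)) / ((α : ℝ) * (Δ * μ + 1) * K) with hT
  have hαpos : (0:ℝ) < (α:ℝ) := by linarith
  have hTpos : 0 < T := by
    apply div_pos
    · have h1 : (0:ℝ) < m := by linarith
      have h2 : 0 < Δ * μ * K := mul_pos hs hKpos
      nlinarith
    · exact mul_pos (mul_pos hαpos (by linarith)) hKpos
  set x := 1 - p with hxdef
  have hxT : T ^ ((1:ℝ)/((α:ℝ)-1)) < x := by linarith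
  have hxpos : 0 < x := lt_of_le_of_lt (Real.rpow_nonneg hTpos.le _) hxT
  have hp1 : p ≤ 1 := by rw [hxdef] at hxpos; linarith
  have hαcast : ((α - 1 : ℕ) : ℝ) = (α:ℝ) - 1 := by
    push_cast [Nat.cast_sub hα1]; ring
  have hαne : ((α:ℝ) - 1) ≠ 0 := by nlinarith
  have hpow : T < x ^ (α - 1) := by
    have h1 := pow_lt_pow_left₀ hxT (Real.rpow_nonneg hTpos.le _) (by omega : α - 1 ≠ 0)
    rwa [← Real.rpow_natCast (T ^ ((1:ℝ)/((α:ℝ)-1))) (α-1), ← Real.rpow_mul hTpos.le,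
      hαcast, one_div_mul_cancel hαne, Real.rpow_one] at h1
  set cstar := (α:ℝ) * μ * K / (Δ * μ * K + (α:ℝ)^2) with hcstar
  have hden2 : 0 < Δ * μ * K + (α:ℝ)^2 := by
    have h2 : 0 < Δ * μ * K := mul_pos hs hKpos
    nlinarith
  have hcpos : 0 < cstar := by
    rw [hcstar]
    exact div_pos (mul_pos (mul_pos hαpos hμ) hKpos) hden2
  have hkey : cstar * T = μ * m / (Δ * μ + 1) := by
    rw [hcstar, hT]
    have h1 : (Δ * μ + 1) ≠ 0 := by positivity
    have h2 : (α:ℝ) ≠ 0 := ne_of_gt hαpos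
    have h3 : K ≠ 0 := ne_of_gt hKpos
    have h4 : (Δ * μ * K + (α:ℝ)^2) ≠ 0 := ne_of_gt hden2
    field_simp
  -- LHS lower bound: termwise coefficient comparison
  have hsum1 : ∑ φ ∈ Finset.Icc α n, cstar * ((n-α).choose (φ-α) : ℝ) * x ^ φ * p ^ (n-φ)
      ≤ ∑ φ ∈ Finset.Icc α n,
        ((α:ℝ) * μ / (Δ * μ + α * (H φ - H (φ - α)))) * ((n).choose φ : ℝ) * x ^ φ * p ^ (n - φ) := by
    apply Finset.sum_le_sum
    intro φ hφ
    rw [Finset.mem_Icc] at hφ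
    obtain ⟨h1, h2⟩ := hφ
    have hxφ : (0:ℝ) ≤ x ^ φ := by positivity
    have hpφ : (0:ℝ) ≤ p ^ (n - φ) := by positivity
    have coeff : cstar * ((n-α).choose (φ-α) : ℝ)
        ≤ ((α:ℝ) * μ / (Δ * μ + α * (H φ - H (φ - α)))) * ((n).choose φ : ℝ) := by
      set d := H φ - H (φ - α) with hdd
      have hd0 : 0 ≤ d := Hdiff_nonneg (Nat.sub_le _ _)
      have hdle : d * (((φ - α : ℕ):ℝ) + 1) ≤ (α:ℝ) := Hdiff_le h1
      have hA1 : 0 < Δ * μ + (α:ℝ) * d :=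
        add_pos_of_pos_of_nonneg hs (mul_nonneg hαpos.le hd0)
      have hC0 : (0:ℝ) ≤ ((n).choose φ : ℝ) := Nat.cast_nonneg _
      have hC0' : (0:ℝ) ≤ ((n-α).choose (φ-α) : ℝ) := Nat.cast_nonneg _
      have hCC : ((n-α).choose (φ-α) : ℝ) ≤ ((n).choose φ : ℝ) := by
        exact_mod_cast choose_sub_le h1 h2
      have hBB : K * ((n-α).choose (φ-α) : ℝ) ≤ (((φ-α:ℕ):ℝ) + 1) * ((n).choose φ:ℝ) := by
        have hnat := lemB hα1 h1 h2
        have hcast : (((n - α + 1) * (n-α).choose (φ-α) : ℕ) : ℝ)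
            ≤ (((φ - α + 1) * (n).choose φ : ℕ) : ℝ) := by exact_mod_cast hnat
        rw [Nat.cast_mul, Nat.cast_mul, hKcast] at hcast
        calc K * ((n-α).choose (φ-α) : ℝ) ≤ ((φ - α + 1 : ℕ) : ℝ) * ((n).choose φ:ℝ) := hcast
        _ = (((φ-α:ℕ):ℝ) + 1) * ((n).choose φ:ℝ) := by push_cast; ring
      have step1 : K * ((n-α).choose (φ-α) : ℝ) * d ≤ (α:ℝ) * ((n).choose φ : ℝ) := by
        calc K * ((n-α).choose (φ-α) : ℝ) * d
            ≤ (((φ-α:ℕ):ℝ) + 1) * ((n).choose φ:ℝ) * d := mul_le_mul_of_nonneg_right hBB hd0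
        _ = ((n).choose φ:ℝ) * (d * (((φ-α:ℕ):ℝ) + 1)) := by ring
        _ ≤ ((n).choose φ:ℝ) * (α:ℝ) := mul_le_mul_of_nonneg_left hdle hC0
        _ = (α:ℝ) * ((n).choose φ : ℝ) := mul_comm _ _
      have main : K * ((n-α).choose (φ-α) : ℝ) * (Δ*μ + (α:ℝ)*d)
          ≤ ((n).choose φ : ℝ) * (Δ*μ*K + (α:ℝ)^2) := by
        have t1 : Δ*μ*(K*((n-α).choose (φ-α) : ℝ)) ≤ Δ*μ*(K*((n).choose φ : ℝ)) :=
          mul_le_mul_of_nonneg_left (mul_le_mul_of_nonneg_left hCC hKpos.le) hs.le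
        have t2 : (α:ℝ)*(K * ((n-α).choose (φ-α) : ℝ) * d) ≤ (α:ℝ)*((α:ℝ) * ((n).choose φ : ℝ)) :=
          mul_le_mul_of_nonneg_left step1 hαpos.le
        linarith [t1, t2]
      rw [hcstar, div_mul_eq_mul_div, div_mul_eq_mul_div, div_le_div_iff₀ hden2 hA1]
      calc (α:ℝ) * μ * K * ((n-α).choose (φ-α) : ℝ) * (Δ * μ + (α:ℝ) * d)
          = ((α:ℝ) * μ) * (K * ((n-α).choose (φ-α) : ℝ) * (Δ*μ + (α:ℝ)*d)) := by ring
      _ ≤ ((α:ℝ) * μ) * (((n).choose φ : ℝ) * (Δ*μ*K + (α:ℝ)^2)) :=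
            mul_le_mul_of_nonneg_left main (by positivity)
      _ = (α:ℝ) * μ * ((n).choose φ : ℝ) * (Δ * μ * K + (α:ℝ)^2) := by ring
    exact mul_le_mul_of_nonneg_right (mul_le_mul_of_nonneg_right coeff hxφ) hpφ
  -- the lower-bound sum equals cstar * x^α
  have hsum2 : ∑ φ ∈ Finset.Icc α n, cstar * ((n-α).choose (φ-α) : ℝ) * x ^ φ * p ^ (n-φ)
      = cstar * x ^ α := by
    rw [← Finset.Ico_add_one_right_eq_Icc, Finset.sum_Ico_eq_sum_range]
    have hr : n + 1 - α = (n - α) + 1 := by omega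
    rw [hr]
    have hcg : ∀ i ∈ Finset.range ((n-α)+1),
        cstar * ((n-α).choose ((α+i)-α) : ℝ) * x ^ (α+i) * p ^ (n-(α+i))
        = (cstar * x ^ α) * (x ^ i * p ^ ((n-α)-i) * ((n-α).choose i : ℝ)) := by
      intro i hi
      have e1 : (α+i)-α = i := by omega
      have e2 : n-(α+i) = (n-α)-i := by omega
      rw [e1, e2, pow_add]; ring
    rw [Finset.sum_congr rfl hcg, ← Finset.mul_sum]
    have hbin : ∑ i ∈ Finset.range ((n-α)+1), x ^ i * p ^ ((n-α)-i) * ((n-α).choose i : ℝ)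
        = 1 := by
      rw [← add_pow]
      have : x + p = 1 := by rw [hxdef]; ring
      rw [this, one_pow]
    rw [hbin, mul_one]
  -- RHS upper bound
  have hgeom : x * (∑ i ∈ Finset.range m, p ^ i) = 1 - p ^ m := by
    have hg := geom_sum_mul p m
    rw [hxdef]
    linear_combination -hg
  have hsumgeom : (∑ i ∈ Finset.range m, p ^ i) ≤ (m:ℝ) := by
    calc (∑ i ∈ Finset.range m, p ^ i) ≤ ∑ i ∈ Finset.range m, (1:ℝ) :=
      Finset.sum_le_sum (fun i _ => pow_le_one₀ hp0 hp1)
    _ = m := by simp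
  have hbinm : ∑ φ ∈ Finset.Icc 1 m, ((m).choose φ : ℝ) * x ^ φ * p ^ (m - φ) = 1 - p ^ m := by
    have hfull : ∑ φ ∈ Finset.range (m+1), x ^ φ * p ^ (m-φ) * ((m).choose φ : ℝ) = 1 := by
      rw [← add_pow]
      have : x + p = 1 := by rw [hxdef]; ring
      rw [this, one_pow]
    rw [← Finset.Ico_add_one_right_eq_Icc]
    have hsplit : ∑ φ ∈ Finset.Ico 0 (m+1), x ^ φ * p ^ (m-φ) * ((m).choose φ : ℝ)
        = x ^ 0 * p ^ (m-0) * ((m).choose 0 : ℝ)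
          + ∑ φ ∈ Finset.Ico 1 (m+1), x ^ φ * p ^ (m-φ) * ((m).choose φ : ℝ) :=
      Finset.sum_eq_sum_Ico_succ_bot (by omega) _
    rw [Finset.range_eq_Ico] at hfull
    rw [hfull] at hsplit
    simp only [pow_zero, Nat.sub_zero, Nat.choose_zero_right, Nat.cast_one, one_mul, mul_one] at hsplit
    have : ∑ φ ∈ Finset.Ico 1 (m+1), ((m).choose φ : ℝ) * x ^ φ * p ^ (m-φ)
        = ∑ φ ∈ Finset.Ico 1 (m+1), x ^ φ * p ^ (m-φ) * ((m).choose φ : ℝ) := by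
      apply Finset.sum_congr rfl; intro φ _; ring
    rw [this]
    linarith
  have hRHS : ∑ φ ∈ Finset.Icc 1 m, (μ / (Δ * μ + H φ)) * ((m).choose φ : ℝ) * x ^ φ * p ^ (m - φ)
      ≤ μ / (Δ * μ + 1) * ((m:ℝ) * x) := by
    have hb1 : ∀ φ ∈ Finset.Icc 1 m,
        (μ / (Δ * μ + H φ)) * ((m).choose φ : ℝ) * x ^ φ * p ^ (m - φ)
        ≤ (μ / (Δ * μ + 1)) * (((m).choose φ : ℝ) * x ^ φ * p ^ (m - φ)) := by
      intro φ hφ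
      rw [Finset.mem_Icc] at hφ
      have hH1 : 1 ≤ H φ := H_one_le hφ.1
      have hcoef : μ / (Δ * μ + H φ) ≤ μ / (Δ * μ + 1) :=
        div_le_div_of_nonneg_left hμ.le (by linarith) (by linarith)
      have hrest : (0:ℝ) ≤ ((m).choose φ : ℝ) * x ^ φ * p ^ (m - φ) := by positivity
      calc (μ / (Δ * μ + H φ)) * ((m).choose φ : ℝ) * x ^ φ * p ^ (m - φ)
          = (μ / (Δ * μ + H φ)) * (((m).choose φ : ℝ) * x ^ φ * p ^ (m - φ)) := by ring
      _ ≤ (μ / (Δ * μ + 1)) * (((m).choose φ : ℝ) * x ^ φ * p ^ (m - φ)) :=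
            mul_le_mul_of_nonneg_right hcoef hrest
    calc ∑ φ ∈ Finset.Icc 1 m, (μ / (Δ * μ + H φ)) * ((m).choose φ : ℝ) * x ^ φ * p ^ (m - φ)
        ≤ ∑ φ ∈ Finset.Icc 1 m, (μ / (Δ * μ + 1)) * (((m).choose φ : ℝ) * x ^ φ * p ^ (m - φ)) :=
          Finset.sum_le_sum hb1
    _ = (μ / (Δ * μ + 1)) * ∑ φ ∈ Finset.Icc 1 m, ((m).choose φ : ℝ) * x ^ φ * p ^ (m - φ) := by
          rw [Finset.mul_sum]
    _ = (μ / (Δ * μ + 1)) * (1 - p ^ m) := by rw [hbinm]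
    _ ≤ μ / (Δ * μ + 1) * ((m:ℝ) * x) := by
          apply mul_le_mul_of_nonneg_left _ (by positivity)
          rw [← hgeom]
          calc x * (∑ i ∈ Finset.range m, p ^ i) ≤ x * (m:ℝ) :=
            mul_le_mul_of_nonneg_left hsumgeom hxpos.le
          _ = (m:ℝ) * x := mul_comm _ _
  -- final comparison
  have hfin : μ / (Δ * μ + 1) * ((m:ℝ) * x) < cstar * x ^ α := by
    have e1 : μ / (Δ * μ + 1) * ((m:ℝ) * x) = (μ * (m:ℝ) / (Δ * μ + 1)) * x := by ring
    have e2 : cstar * x ^ α = (cstar * x ^ (α-1)) * x := by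
      have hee : α - 1 + 1 = α := by omega
      rw [mul_assoc, ← pow_succ, hee]
    rw [e1, e2, ← hkey]
    apply mul_lt_mul_of_pos_right _ hxpos
    exact mul_lt_mul_of_pos_left hpow hcpos
  calc ∑ φ ∈ Finset.Icc 1 m, (μ / (Δ * μ + H φ)) * ((m).choose φ : ℝ) * x ^ φ * p ^ (m - φ)
      ≤ μ / (Δ * μ + 1) * ((m:ℝ) * x) := hRHS
  _ < cstar * x ^ α := hfin
  _ = ∑ φ ∈ Finset.Icc α n, cstar * ((n-α).choose (φ-α) : ℝ) * x ^ φ * p ^ (n-φ) := hsum2.symm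
  _ ≤ ∑ φ ∈ Finset.Icc α n,
        ((α:ℝ) * μ / (Δ * μ + α * (H φ - H (φ - α)))) * ((n).choose φ : ℝ) * x ^ φ * p ^ (n - φ) := hsum1
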